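/- Let m, n, k ≥ 1, let 1 ≤ i_1 < ⋯ < i_k ≤ m, let j_1, …, j_k be pairwise distinct elements of {1,…,n}, and let β be the join of the join-congruences cg(i_1,j_1), …, cg(i_k,j_k) of the grid K_{m,n}. Then: (i) for all elements (a,b), (c,d) of K_{m,n}, ((a,b),(c,d)) ∈ β if and only if both ((a,b),(max(a,c),max(b,d))) ∈ β and ((c,d),(max(a,c),max(b,d))) ∈ β; (ii) for 0 ≤ r < s ≤ m and 0 ≤ t ≤ n, ((r,t),(s,t)) ∈ β if and only if for every x ∈ {r+1,…,s} there is a p ∈ {1,…,k} with i_p = x and j_p ≤ t; (iii) for 0 ≤ r < s ≤ n and 0 ≤ t ≤ m, ((t,r),(t,s)) ∈ β if and only if for every x ∈ {r+1,…,s} there is a p ∈ {1,…,k} with j_p = x and i_p ≤ t. -/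

import Mathlib

open Fin.NatCast

/-- The grid `K_{m,n}`: the lattice `{0,…,m} × {0,…,n}` ordered componentwise
(join and meet are componentwise max and min). -/
abbrev Grid (m n : ℕ) := Fin (m + 1) × Fin (n + 1)

/-- A join-congruence of a join-semilattice: an equivalence relation compatible with
joining a fixed element. -/
def IsJoinCong {α : Type*} [SemilatticeSup α] (r : α → α → Prop) : Prop :=
  Equivalence r ∧ ∀ a b c : α, r a b → r (a ⊔ c) (b ⊔ c)

/-- The join-congruence generated by a relation `R`: the smallest join-congruence
containing `R` (the intersection of all join-congruences containing `R`). -/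
def joinCongGen {α : Type*} [SemilatticeSup α] (R : α → α → Prop) : α → α → Prop :=
  fun a b => ∀ r : α → α → Prop, IsJoinCong r → (∀ x y, R x y → r x y) → r a b

/-- The join of a family of join-congruences: the smallest join-congruence containing
all members of the family. -/
def joinCongSup {α : Type*} [SemilatticeSup α] {ι : Sort*} (f : ι → α → α → Prop) :
    α → α → Prop :=
  joinCongGen fun a b => ∃ i, f i a b

/-- For `1 ≤ i ≤ m` and `1 ≤ j ≤ n`, the join-congruence `cg(i,j)` of the grid `K_{m,n}`
generated by the pairs `((i,j−1),(i,j))` and `((i−1,j),(i,j))`. -/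
def cg (m n i j : ℕ) : Grid m n → Grid m n → Prop :=
  joinCongGen fun a b =>
    b = ((i : Fin (m + 1)), (j : Fin (n + 1))) ∧
      (a = ((i : Fin (m + 1)), ((j - 1 : ℕ) : Fin (n + 1))) ∨
        a = (((i - 1 : ℕ) : Fin (m + 1)), (j : Fin (n + 1))))

lemma isJoinCong_joinCongGen {α : Type*} [SemilatticeSup α] (R : α → α → Prop) :
    IsJoinCong (joinCongGen R) := by
  refine ⟨⟨?_, ?_, ?_⟩, ?_⟩
  · intro a r hr _; exact hr.1.refl a
  · intro a b h r hr hR; exact hr.1.symm (h r hr hR)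
  · intro a b c h1 h2 r hr hR; exact hr.1.trans (h1 r hr hR) (h2 r hr hR)
  · intro a b c h r hr hR; exact hr.2 a b c (h r hr hR)

lemma base_le_joinCongGen {α : Type*} [SemilatticeSup α] (R : α → α → Prop) {a b : α}
    (h : R a b) : joinCongGen R a b := fun r hr hR => hR a b h

lemma joinCongGen_le {α : Type*} [SemilatticeSup α] {R r : α → α → Prop}
    (hr : IsJoinCong r) (h : ∀ x y, R x y → r x y) {a b : α}
    (hab : joinCongGen R a b) : r a b := hab r hr h

lemma isJoinCong_iffU {α : Type*} [SemilatticeSup α] (U : α → Prop)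
    (hU : ∀ a b, U (a ⊔ b) ↔ U a ∨ U b) : IsJoinCong (fun a b => (U a ↔ U b)) := by
  refine ⟨⟨fun a => Iff.rfl, fun h => h.symm, fun h1 h2 => h1.trans h2⟩, ?_⟩
  intro a b c h
  rw [hU, hU]
  tauto

lemma grid_cast_val (m a : ℕ) (h : a ≤ m) : ((a : Fin (m+1))).val = a :=
  Fin.val_cast_of_lt (by omega)

lemma beta_hstep (m n k : ℕ) (i j : Fin k → ℕ)
    (him : ∀ s, i s ≤ m) (hjn : ∀ s, j s ≤ n)
    (x y : ℕ) (hxm : x ≤ m) (hyn : y ≤ n)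
    (p : Fin k) (hip : i p = x) (hjp : j p ≤ y) :
    joinCongSup (fun s : Fin k => cg m n (i s) (j s))
      (((x - 1 : ℕ) : Fin (m+1)), (y : Fin (n+1))) ((x : Fin (m+1)), (y : Fin (n+1))) := by
  have hgen : joinCongSup (fun s : Fin k => cg m n (i s) (j s))
      (((i p - 1 : ℕ) : Fin (m+1)), ((j p : ℕ) : Fin (n+1)))
      ((i p : Fin (m+1)), ((j p : ℕ) : Fin (n+1))) := by
    intro r hr hR
    exact hR _ _ ⟨p, base_le_joinCongGen _ ⟨rfl, Or.inr rfl⟩⟩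
  have key := (isJoinCong_joinCongGen _).2 _ _
    ((((x - 1 : ℕ) : Fin (m+1)), (y : Fin (n+1))) : Grid m n) hgen
  have h1 : ((j p : ℕ) : Fin (n+1)) ≤ (y : Fin (n+1)) := by
    rw [Fin.le_def, grid_cast_val n _ (hjn p), grid_cast_val n y hyn]; exact hjp
  have h2 : ((x - 1 : ℕ) : Fin (m+1)) ≤ (x : Fin (m+1)) := by
    rw [Fin.le_def, grid_cast_val m _ (by omega), grid_cast_val m x hxm]; omega
  have ea : ((((i p - 1 : ℕ) : Fin (m+1)), ((j p : ℕ) : Fin (n+1))) : Grid m n) ⊔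
      (((x - 1 : ℕ) : Fin (m+1)), (y : Fin (n+1)))
      = (((x - 1 : ℕ) : Fin (m+1)), (y : Fin (n+1))) := by
    show ((((i p - 1 : ℕ) : Fin (m+1)) ⊔ ((x - 1 : ℕ) : Fin (m+1))),
      (((j p : ℕ) : Fin (n+1)) ⊔ (y : Fin (n+1)))) = _
    rw [hip, sup_idem, sup_eq_right.2 h1]
  have eb : (((i p : Fin (m+1)), ((j p : ℕ) : Fin (n+1))) : Grid m n) ⊔
      (((x - 1 : ℕ) : Fin (m+1)), (y : Fin (n+1)))
      = ((x : Fin (m+1)), (y : Fin (n+1))) := by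
    show (((i p : Fin (m+1)) ⊔ ((x - 1 : ℕ) : Fin (m+1))),
      (((j p : ℕ) : Fin (n+1)) ⊔ (y : Fin (n+1)))) = _
    rw [hip, sup_eq_left.2 h2, sup_eq_right.2 h1]
  rw [ea, eb] at key
  exact key

lemma beta_vstep (m n k : ℕ) (i j : Fin k → ℕ)
    (him : ∀ s, i s ≤ m) (hjn : ∀ s, j s ≤ n)
    (x y : ℕ) (hxm : x ≤ m) (hyn : y ≤ n) (hy1 : 1 ≤ y)
    (p : Fin k) (hjp : j p = y) (hip : i p ≤ x) :
    joinCongSup (fun s : Fin k => cg m n (i s) (j s))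
      ((x : Fin (m+1)), ((y - 1 : ℕ) : Fin (n+1))) ((x : Fin (m+1)), (y : Fin (n+1))) := by
  have hgen : joinCongSup (fun s : Fin k => cg m n (i s) (j s))
      (((i p : ℕ) : Fin (m+1)), ((j p - 1 : ℕ) : Fin (n+1)))
      ((i p : Fin (m+1)), ((j p : ℕ) : Fin (n+1))) := by
    intro r hr hR
    exact hR _ _ ⟨p, base_le_joinCongGen _ ⟨rfl, Or.inl rfl⟩⟩
  have key := (isJoinCong_joinCongGen _).2 _ _
    (((x : Fin (m+1)), ((y - 1 : ℕ) : Fin (n+1))) : Grid m n) hgen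
  have h1 : ((i p : ℕ) : Fin (m+1)) ≤ (x : Fin (m+1)) := by
    rw [Fin.le_def, grid_cast_val m _ (him p), grid_cast_val m x hxm]; exact hip
  have h2 : ((y - 1 : ℕ) : Fin (n+1)) ≤ (y : Fin (n+1)) := by
    rw [Fin.le_def, grid_cast_val n _ (by omega), grid_cast_val n y hyn]; omega
  have ea : ((((i p : ℕ) : Fin (m+1)), ((j p - 1 : ℕ) : Fin (n+1))) : Grid m n) ⊔
      ((x : Fin (m+1)), ((y - 1 : ℕ) : Fin (n+1)))
      = ((x : Fin (m+1)), ((y - 1 : ℕ) : Fin (n+1))) := by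
    show ((((i p : ℕ) : Fin (m+1)) ⊔ (x : Fin (m+1))),
      (((j p - 1 : ℕ) : Fin (n+1)) ⊔ ((y - 1 : ℕ) : Fin (n+1)))) = _
    rw [hjp, sup_idem, sup_eq_right.2 h1]
  have eb : (((i p : Fin (m+1)), ((j p : ℕ) : Fin (n+1))) : Grid m n) ⊔
      ((x : Fin (m+1)), ((y - 1 : ℕ) : Fin (n+1)))
      = ((x : Fin (m+1)), (y : Fin (n+1))) := by
    show (((i p : Fin (m+1)) ⊔ (x : Fin (m+1))),
      (((j p : ℕ) : Fin (n+1)) ⊔ ((y - 1 : ℕ) : Fin (n+1)))) = _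
    rw [hjp, sup_eq_right.2 h1, sup_eq_left.2 h2]
  rw [ea, eb] at key
  exact key

lemma beta_le_rect (m n k : ℕ) (i j : Fin k → ℕ)
    (hi1 : ∀ s, 1 ≤ i s) (him : ∀ s, i s ≤ m) (hj1 : ∀ s, 1 ≤ j s) (hjn : ∀ s, j s ≤ n)
    (X T : ℕ)
    (hgen1 : ∀ p : Fin k, T = j p → X ≤ i p)
    (hgen2 : ∀ p : Fin k, X = i p → T ≤ j p)
    {a b : Grid m n}
    (hab : joinCongSup (fun s : Fin k => cg m n (i s) (j s)) a b) :
    ((X ≤ a.1.val ∨ T ≤ a.2.val) ↔ (X ≤ b.1.val ∨ T ≤ b.2.val)) := by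
  have hU : ∀ a b : Grid m n,
      (X ≤ (a ⊔ b).1.val ∨ T ≤ (a ⊔ b).2.val) ↔
        ((X ≤ a.1.val ∨ T ≤ a.2.val) ∨ (X ≤ b.1.val ∨ T ≤ b.2.val)) := by
    intro a b
    show X ≤ max a.1.val b.1.val ∨ T ≤ max a.2.val b.2.val ↔ _
    simp only [le_max_iff]
    tauto
  refine joinCongGen_le (isJoinCong_iffU (fun a : Grid m n => X ≤ a.1.val ∨ T ≤ a.2.val) hU)
    ?_ hab
  rintro a b ⟨p, hp⟩
  refine joinCongGen_le (isJoinCong_iffU (fun a : Grid m n => X ≤ a.1.val ∨ T ≤ a.2.val) hU)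
    ?_ hp
  rintro a b ⟨rfl, (rfl | rfl)⟩
  · show (X ≤ ((i p : Fin (m+1))).val ∨ T ≤ (((j p - 1 : ℕ) : Fin (n+1))).val) ↔
      (X ≤ ((i p : Fin (m+1))).val ∨ T ≤ (((j p : ℕ) : Fin (n+1))).val)
    rw [grid_cast_val m _ (him p), grid_cast_val n _ (by have := hjn p; omega),
        grid_cast_val n _ (hjn p)]
    have h1 := hgen1 p
    have h2 := hj1 p
    constructor
    · rintro (h | h)
      · exact Or.inl h
      · exact Or.inr (by omega)
    · rintro (h | h)
      · exact Or.inl h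
      · rcases Nat.lt_or_ge T (j p) with h' | h'
        · exact Or.inr (by omega)
        · exact Or.inl (h1 (by omega))
  · show (X ≤ (((i p - 1 : ℕ) : Fin (m+1))).val ∨ T ≤ (((j p : ℕ) : Fin (n+1))).val) ↔
      (X ≤ ((i p : Fin (m+1))).val ∨ T ≤ (((j p : ℕ) : Fin (n+1))).val)
    rw [grid_cast_val m _ (by have := him p; omega), grid_cast_val m _ (him p),
        grid_cast_val n _ (hjn p)]
    have h1 := hgen2 p
    have h2 := hi1 p
    constructor
    · rintro (h | h)
      · exact Or.inl (by omega)
      · exact Or.inr h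
    · rintro (h | h)
      · rcases Nat.lt_or_ge X (i p) with h' | h'
        · exact Or.inl (by omega)
        · exact Or.inr (h1 (by omega))
      · exact Or.inr h

/-- Description of the join `β` of the join-congruences `cg(i_s, j_s)` of the grid
`K_{m,n}`, where `1 ≤ i_1 < ⋯ < i_k ≤ m` and the `j_s` are pairwise distinct elements
of `{1,…,n}`:
(i) `(p,q) ∈ β` iff `(p, p ⊔ q) ∈ β` and `(q, p ⊔ q) ∈ β` (joins are componentwise
maxima);
(ii) for `0 ≤ r < s ≤ m`, `((r,t),(s,t)) ∈ β` iff every `x ∈ {r+1,…,s}` equals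
`i_p` for some `p` with `j_p ≤ t`;
(iii) for `0 ≤ r < s ≤ n`, `((t,r),(t,s)) ∈ β` iff every `x ∈ {r+1,…,s}` equals
`j_p` for some `p` with `i_p ≤ t`. -/
theorem joinCongSup_description (m n k : ℕ) (hm : 1 ≤ m) (hn : 1 ≤ n) (hk : 1 ≤ k)
    (i j : Fin k → ℕ)
    (hmono : StrictMono i) (hi1 : ∀ s, 1 ≤ i s) (him : ∀ s, i s ≤ m)
    (hjinj : Function.Injective j) (hj1 : ∀ s, 1 ≤ j s) (hjn : ∀ s, j s ≤ n)
    (β : Grid m n → Grid m n → Prop)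
    (hβ : β = joinCongSup fun s : Fin k => cg m n (i s) (j s)) :
    (∀ p q : Grid m n, β p q ↔ (β p (p ⊔ q) ∧ β q (p ⊔ q))) ∧
    (∀ r s t : ℕ, r < s → s ≤ m → t ≤ n →
      (β ((r : Fin (m + 1)), (t : Fin (n + 1))) ((s : Fin (m + 1)), (t : Fin (n + 1))) ↔
        ∀ x : ℕ, r + 1 ≤ x → x ≤ s → ∃ p : Fin k, i p = x ∧ j p ≤ t)) ∧
    (∀ r s t : ℕ, r < s → s ≤ n → t ≤ m →
      (β ((t : Fin (m + 1)), (r : Fin (n + 1))) ((t : Fin (m + 1)), (s : Fin (n + 1))) ↔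
        ∀ x : ℕ, r + 1 ≤ x → x ≤ s → ∃ p : Fin k, j p = x ∧ i p ≤ t)) := by
  subst hβ
  have hbc : IsJoinCong (joinCongSup fun s : Fin k => cg m n (i s) (j s)) :=
    isJoinCong_joinCongGen _
  refine ⟨?_, ?_, ?_⟩
  · -- (i)
    intro p q
    constructor
    · intro h
      refine ⟨?_, ?_⟩
      · have h2 := hbc.2 p q p h
        rwa [sup_idem, sup_comm q p] at h2
      · have h2 := hbc.2 p q q h
        rw [sup_idem] at h2
        exact hbc.1.symm h2
    · rintro ⟨h1, h2⟩
      exact hbc.1.trans h1 (hbc.1.symm h2)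
  · -- (ii)
    intro r s t hrs hsm htn
    constructor
    · intro hb x hx1 hxs
      by_contra hc
      push_neg at hc
      by_cases hex : ∃ p : Fin k, i p = x
      · obtain ⟨p₀, hp₀⟩ := hex
        have key := beta_le_rect m n k i j hi1 him hj1 hjn x (j p₀)
          (fun p hp => by have e := hjinj hp; rw [← e, hp₀])
          (fun p hp => by have e : p₀ = p := hmono.injective (by rw [hp₀, hp]); rw [e])
          hb
        simp only [grid_cast_val m r (by omega), grid_cast_val n t htn,
          grid_cast_val m s hsm] at key
        have hrhs := key.mpr (Or.inl hxs)
        have ht0 := hc p₀ hp₀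
        rcases hrhs with h | h <;> omega
      · have key := beta_le_rect m n k i j hi1 him hj1 hjn x (n + 1)
          (fun p hp => absurd (hjn p) (by omega))
          (fun p hp => absurd ⟨p, hp.symm⟩ hex)
          hb
        simp only [grid_cast_val m r (by omega), grid_cast_val n t htn,
          grid_cast_val m s hsm] at key
        have hrhs := key.mpr (Or.inl hxs)
        rcases hrhs with h | h <;> omega
    · intro hcond
      have main : ∀ s' : ℕ, s' ≤ s → r ≤ s' →
          (joinCongSup fun s : Fin k => cg m n (i s) (j s))
            ((r : Fin (m + 1)), (t : Fin (n + 1))) ((s' : Fin (m + 1)), (t : Fin (n + 1))) := by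
        intro s'
        induction s' with
        | zero =>
          intro _ hr0
          have hr : r = 0 := by omega
          subst hr
          exact hbc.1.refl _
        | succ s' ih =>
          intro hle hrle
          rcases Nat.eq_or_lt_of_le hrle with heq | hlt
          · rw [← heq]
            exact hbc.1.refl _
          · have prev := ih (by omega) (by omega)
            obtain ⟨p, hp1, hp2⟩ := hcond (s' + 1) (by omega) hle
            have step := beta_hstep m n k i j him hjn (s' + 1) t (by omega) htn p hp1 hp2
            simp only [Nat.add_sub_cancel] at step
            exact hbc.1.trans prev step
      exact main s le_rfl (le_of_lt hrs)
  · -- (iii)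
    intro r s t hrs hsn htm
    constructor
    · intro hb x hx1 hxs
      by_contra hc
      push_neg at hc
      by_cases hex : ∃ p : Fin k, j p = x
      · obtain ⟨p₀, hp₀⟩ := hex
        have key := beta_le_rect m n k i j hi1 him hj1 hjn (i p₀) x
          (fun p hp => by have e : p₀ = p := hjinj (by rw [hp₀, ← hp]); rw [e])
          (fun p hp => by have e := hmono.injective hp; rw [← e, hp₀])
          hb
        simp only [grid_cast_val m t htm, grid_cast_val n r (by omega),
          grid_cast_val n s hsn] at key
        have hrhs := key.mpr (Or.inr hxs)
        have ht0 := hc p₀ hp₀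
        rcases hrhs with h | h <;> omega
      · have key := beta_le_rect m n k i j hi1 him hj1 hjn (m + 1) x
          (fun p hp => absurd ⟨p, hp.symm⟩ hex)
          (fun p hp => absurd (him p) (by omega))
          hb
        simp only [grid_cast_val m t htm, grid_cast_val n r (by omega),
          grid_cast_val n s hsn] at key
        have hrhs := key.mpr (Or.inr hxs)
        rcases hrhs with h | h <;> omega
    · intro hcond
      have main : ∀ s' : ℕ, s' ≤ s → r ≤ s' →
          (joinCongSup fun s : Fin k => cg m n (i s) (j s))
            ((t : Fin (m + 1)), (r : Fin (n + 1))) ((t : Fin (m + 1)), (s' : Fin (n + 1))) := by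
        intro s'
        induction s' with
        | zero =>
          intro _ hr0
          have hr : r = 0 := by omega
          subst hr
          exact hbc.1.refl _
        | succ s' ih =>
          intro hle hrle
          rcases Nat.eq_or_lt_of_le hrle with heq | hlt
          · rw [← heq]
            exact hbc.1.refl _
          · have prev := ih (by omega) (by omega)
            obtain ⟨p, hp1, hp2⟩ := hcond (s' + 1) (by omega) hle
            have step := beta_vstep m n k i j him hjn t (s' + 1) htm (by omega) (by omega) p hp1 hp2
            simp only [Nat.add_sub_cancel] at step
            exact hbc.1.trans prev step
      exact main s le_rfl (le_of_lt hrs)
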